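/- Let 𝔞_J be a positive definite sesquilinear form on a subspace D of a Hilbert space with J(D) = D, satisfying 𝔞_J[Jx, Jy] = 𝔞_J[x,y], and let 𝔳 be a symmetric off-diagonal form on D (𝔳[Jx,y] = -𝔳[x,Jy]) with relative bound v₀ = sup_{x ≠ 0} |𝔳[x,x]|/𝔞_J[x,x] < ∞. Then for every x ∈ D with decomposition x = x₊ + x₋, x± ∈ Ran(I±J) ∩ D, one has |𝔳[x,x]| ≤ 2 v₀ √(𝔞_J[x₊,x₊] · 𝔞_J[x₋,x₋]). -/

import Mathlib

open scoped ComplexConjugate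

/-- If `aJ` is a positive definite symmetric sesquilinear form on a `J`-invariant subspace `D`
with `aJ[Jx, Jy] = aJ[x, y]`, and `v` is a symmetric off-diagonal form with relative bound
`v₀` (i.e. `|v[x]| ≤ v₀ · aJ[x]` on `D`), then for `x ∈ D` with decomposition
`x = x₊ + x₋`, `x± = (x ± Jx)/2`, one has `|v[x]| ≤ 2 v₀ √(aJ[x₊] · aJ[x₋])`. -/
theorem offdiag_form_estimate
    {H : Type*} [NormedAddCommGroup H] [InnerProductSpace ℂ H] [CompleteSpace H]
    (J : H →L[ℂ] H) (hJsa : IsSelfAdjoint J) (hJ2 : ∀ x : H, J (J x) = x)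
    (D : Submodule ℂ H) (hJD : ∀ x ∈ D, J x ∈ D)
    (aJ v : H → H → ℂ)
    -- aJ is a sesquilinear, symmetric, positive definite form on D, commuting with J
    (haJadd₁ : ∀ x y z, x ∈ D → y ∈ D → z ∈ D → aJ (x + y) z = aJ x z + aJ y z)
    (haJadd₂ : ∀ x y z, x ∈ D → y ∈ D → z ∈ D → aJ x (y + z) = aJ x y + aJ x z)
    (haJsmul₁ : ∀ (c : ℂ) (x y : H), x ∈ D → y ∈ D → aJ (c • x) y = conj c * aJ x y)
    (haJsmul₂ : ∀ (c : ℂ) (x y : H), x ∈ D → y ∈ D → aJ x (c • y) = c * aJ x y)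
    (haJsym : ∀ x y, x ∈ D → y ∈ D → aJ x y = conj (aJ y x))
    (haJpos : ∀ x, x ∈ D → x ≠ 0 → 0 < (aJ x x).re)
    (haJJ : ∀ x y, x ∈ D → y ∈ D → aJ (J x) (J y) = aJ x y)
    -- v is a sesquilinear, symmetric, off-diagonal form on D
    (hadd₁ : ∀ x y z, x ∈ D → y ∈ D → z ∈ D → v (x + y) z = v x z + v y z)
    (hadd₂ : ∀ x y z, x ∈ D → y ∈ D → z ∈ D → v x (y + z) = v x y + v x z)
    (hsmul₁ : ∀ (c : ℂ) (x y : H), x ∈ D → y ∈ D → v (c • x) y = conj c * v x y)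
    (hsmul₂ : ∀ (c : ℂ) (x y : H), x ∈ D → y ∈ D → v x (c • y) = c * v x y)
    (hsym : ∀ x y, x ∈ D → y ∈ D → v x y = conj (v y x))
    (hoff : ∀ x y, x ∈ D → y ∈ D → v (J x) y = -v x (J y))
    -- the relative bound
    (v₀ : ℝ) (hv₀ : ∀ x, x ∈ D → ‖v x x‖ ≤ v₀ * (aJ x x).re)
    (x : H) (hx : x ∈ D) :
    ‖v x x‖ ≤
      2 * v₀ * Real.sqrt ((aJ ((2⁻¹ : ℂ) • (x + J x)) ((2⁻¹ : ℂ) • (x + J x))).re *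
        (aJ ((2⁻¹ : ℂ) • (x - J x)) ((2⁻¹ : ℂ) • (x - J x))).re) := by
  -- abbreviations
  set p : H := (2⁻¹ : ℂ) • (x + J x) with hpdef
  set m : H := (2⁻¹ : ℂ) • (x - J x) with hmdef
  have hp : p ∈ D := D.smul_mem _ (D.add_mem hx (hJD x hx))
  have hm : m ∈ D := D.smul_mem _ (D.sub_mem hx (hJD x hx))
  have hJp : J p = p := by
    simp only [hpdef, map_smul, map_add, hJ2 x]
    rw [add_comm]
  have hJm : J m = -m := by
    simp only [hmdef, map_smul, map_sub, hJ2 x]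
    rw [← smul_neg, neg_sub]
  have hxpm : p + m = x := by
    rw [hpdef, hmdef]; module
  -- neg / zero lemmas
  have vneg₂ : ∀ a b, a ∈ D → b ∈ D → v a (-b) = - v a b := by
    intro a b ha hb
    have := hsmul₂ (-1) a b ha hb
    simpa using this
  have aJneg₂ : ∀ a b, a ∈ D → b ∈ D → aJ a (-b) = - aJ a b := by
    intro a b ha hb
    have := haJsmul₂ (-1) a b ha hb
    simpa using this
  -- vanishing of diagonal pieces
  have vpp : v p p = 0 := by
    have h := hoff p p hp hp
    rw [hJp] at h
    linear_combination h / 2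
  have vmm : v m m = 0 := by
    have h := hoff m m hm hm
    rw [hJm, vneg₂ m m hm hm] at h
    have h2 := hsmul₁ (-1) m m hm hm
    rw [neg_one_smul] at h2
    rw [h2] at h
    simp only [map_neg, map_one] at h
    linear_combination -h / 2
  have aJpm : aJ p m = 0 := by
    have h := haJJ p m hp hm
    rw [hJp, hJm, aJneg₂ p m hp hm] at h
    linear_combination -h / 2
  have aJmp : aJ m p = 0 := by
    rw [haJsym m p hm hp, aJpm, map_zero]
  set V : ℂ := v p m with hVdef
  have hvmp : v m p = conj V := hsym m p hm hp
  have hpm : p + m ∈ D := D.add_mem hp hm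
  have hvxx : v x x = V + conj V := by
    rw [← hxpm, hadd₁ p m (p + m) hp hm hpm, hadd₂ p p m hp hp hm,
      hadd₂ m p m hm hp hm, vpp, vmm, hvmp]
    ring
  have habs : ‖v x x‖ ≤ 2 * ‖V‖ := by
    rw [hvxx]
    calc ‖V + conj V‖ ≤ ‖V‖ + ‖conj V‖ :=
          norm_add_le _ _
      _ = 2 * ‖V‖ := by rw [Complex.norm_conj]; ring
  set a : ℝ := (aJ p p).re with hadef
  set b : ℝ := (aJ m m).re with hbdef
  -- degenerate cases
  by_cases hp0 : p = 0
  · have hV0 : V = 0 := by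
      have := hsmul₁ 0 0 m D.zero_mem hm
      simp only [zero_smul] at this
      rw [hVdef, hp0, this]
      simp
    have ha0 : a = 0 := by
      have := haJsmul₁ 0 0 0 D.zero_mem D.zero_mem
      simp only [zero_smul] at this
      rw [hadef, hp0, this]
      simp
    rw [hvxx, hV0, ha0]
    simp
  by_cases hm0 : m = 0
  · have hV0 : V = 0 := by
      have := hsmul₂ 0 p 0 hp D.zero_mem
      simp only [zero_smul] at this
      rw [hVdef, hm0, this]
      simp
    have hb0 : b = 0 := by
      have := haJsmul₂ 0 0 0 D.zero_mem D.zero_mem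
      simp only [zero_smul] at this
      rw [hbdef, hm0, this]
      simp
    rw [hvxx, hV0, hb0]
    simp
  -- main case
  have ha : 0 < a := haJpos p hp hp0
  have hb : 0 < b := haJpos m hm hm0
  have hsa : 0 < Real.sqrt a := Real.sqrt_pos.mpr ha
  have hsb : 0 < Real.sqrt b := Real.sqrt_pos.mpr hb
  set t : ℝ := Real.sqrt (Real.sqrt b / Real.sqrt a) with htdef
  have ht : 0 < t := Real.sqrt_pos.mpr (div_pos hsb hsa)
  have ht2 : t ^ 2 = Real.sqrt b / Real.sqrt a := Real.sq_sqrt (le_of_lt (div_pos hsb hsa))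
  set ω : ℂ := if V = 0 then 1 else V / (‖V‖ : ℂ) with hωdef
  have hωV : conj ω * V = (‖V‖ : ℂ) := by
    rw [hωdef]
    by_cases h : V = 0
    · simp [h]
    · rw [if_neg h]
      have habsV : (‖V‖ : ℂ) ≠ 0 := by
        exact_mod_cast norm_ne_zero_iff.mpr h
      rw [map_div₀, Complex.conj_ofReal]
      field_simp
      rw [mul_comm, Complex.mul_conj, Complex.normSq_eq_norm_sq]
      push_cast
      ring
  have hωω : conj ω * ω = 1 := by
    rw [hωdef]
    by_cases h : V = 0
    · simp [h]
    · rw [if_neg h]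
      have habsV : (‖V‖ : ℂ) ≠ 0 := by
        exact_mod_cast norm_ne_zero_iff.mpr h
      rw [map_div₀, Complex.conj_ofReal]
      field_simp
      rw [mul_comm, Complex.mul_conj, Complex.normSq_eq_norm_sq]
      push_cast
      ring
  set c : ℂ := (t : ℂ) * ω with hcdef
  set d : ℂ := ((t⁻¹ : ℝ) : ℂ) with hddef
  have htC : (t : ℂ) ≠ 0 := by exact_mod_cast ht.ne'
  have hcd : conj c * d = conj ω := by
    rw [hcdef, hddef, map_mul, Complex.conj_ofReal]
    push_cast
    field_simp
  have hdc : conj d * c = ω := by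
    rw [hcdef, hddef, Complex.conj_ofReal]
    push_cast
    field_simp
  have hcc : conj c * c = ((t ^ 2 : ℝ) : ℂ) := by
    rw [hcdef, map_mul, Complex.conj_ofReal]
    push_cast
    calc (t : ℂ) * conj ω * ((t : ℂ) * ω) = (t : ℂ) ^ 2 * (conj ω * ω) := by ring
      _ = (t : ℂ) ^ 2 := by rw [hωω]; ring
  have hdd : conj d * d = (((t ^ 2)⁻¹ : ℝ) : ℂ) := by
    rw [hddef, Complex.conj_ofReal]
    push_cast
    ring
  set y : H := c • p + d • m with hydef
  have hcp : c • p ∈ D := D.smul_mem _ hp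
  have hdm : d • m ∈ D := D.smul_mem _ hm
  have hy : y ∈ D := D.add_mem hcp hdm
  -- v y y
  have hvyy : v y y = 2 * (‖V‖ : ℂ) := by
    rw [hydef, hadd₁ _ _ _ hcp hdm hy, hadd₂ _ _ _ hcp hcp hdm,
      hadd₂ _ _ _ hdm hcp hdm, hsmul₁ c p _ hp hcp, hsmul₁ c p _ hp hdm,
      hsmul₁ d m _ hm hcp, hsmul₁ d m _ hm hdm,
      hsmul₂ c p p hp hp, hsmul₂ d p m hp hm, hsmul₂ c m p hm hp, hsmul₂ d m m hm hm,
      vpp, vmm, hvmp, ← hVdef]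
    have hωV2 : ω * conj V = (‖V‖ : ℂ) := by
      have h := congrArg conj hωV
      rw [map_mul, Complex.conj_conj, Complex.conj_ofReal] at h
      linear_combination h
    linear_combination V * hcd + (conj V) * hdc + hωV + hωV2
  -- aJ y y
  have haJyyC : aJ y y = ((t ^ 2 : ℝ) : ℂ) * aJ p p + (((t ^ 2)⁻¹ : ℝ) : ℂ) * aJ m m := by
    rw [hydef, haJadd₁ _ _ _ hcp hdm hy, haJadd₂ _ _ _ hcp hcp hdm,
      haJadd₂ _ _ _ hdm hcp hdm, haJsmul₁ c p _ hp hcp, haJsmul₁ c p _ hp hdm,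
      haJsmul₁ d m _ hm hcp, haJsmul₁ d m _ hm hdm,
      haJsmul₂ c p p hp hp, haJsmul₂ d p m hp hm, haJsmul₂ c m p hm hp,
      haJsmul₂ d m m hm hm, aJpm, aJmp]
    linear_combination (aJ p p) * hcc + (aJ m m) * hdd
  have haJyy : (aJ y y).re = t ^ 2 * a + (t ^ 2)⁻¹ * b := by
    rw [haJyyC, Complex.add_re, Complex.re_ofReal_mul, Complex.re_ofReal_mul, ← hadef, ← hbdef]
  have hkey : t ^ 2 * a + (t ^ 2)⁻¹ * b = 2 * Real.sqrt (a * b) := by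
    rw [ht2, Real.sqrt_mul (le_of_lt ha)]
    have h1 : Real.sqrt a ^ 2 = a := Real.sq_sqrt ha.le
    have h2 : Real.sqrt b ^ 2 = b := Real.sq_sqrt hb.le
    field_simp
    nlinarith [hsa, hsb]
  have hbound := hv₀ y hy
  rw [hvyy, haJyy, hkey] at hbound
  have habsyy : ‖2 * (‖V‖ : ℂ)‖ = 2 * ‖V‖ := by
    rw [norm_mul]
    simp
  rw [habsyy] at hbound
  calc ‖v x x‖ ≤ 2 * ‖V‖ := habs
    _ ≤ v₀ * (2 * Real.sqrt (a * b)) := hbound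
    _ = 2 * v₀ * Real.sqrt (a * b) := by ring
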